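/- Let C = (C₁, C₀, s, t, ε, m, n) be an internal groupoid in the category of crossed modules, with C₁ = (A₁,B₁,α₁), C₀ = (A₀,B₀,α₀). Set L = ker s_A, M = ker s_B, N = A₀, P = B₀, λ = α₁|_L, λ' = t_A|_L, μ = t_B|_M, ν = α₀, and define actions p•m = 1_p + m - 1_p, p•l = 1_p • l (via the B₁-action on A₁), and h : M × N → L, h(m,n) = m•1_n - 1_n. Then (L, M, N, P, λ, λ', μ, ν, h) is a crossed square. -/

import Mathlib

/-- An internal category (equivalently, internal groupoid) in the category `XMod` of
crossed modules over groups: crossed modules `C₁ = (A₁, B₁, α₁)` (with action `φ₁`)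
and `C₀ = (A₀, B₀, α₀)` (with action `φ₀`), crossed module morphisms
`s = ⟨sA, sB⟩, t = ⟨tA, tB⟩ : C₁ → C₀`, `ε = ⟨εA, εB⟩ : C₀ → C₁`, and a composition
`m = ⟨compA, compB⟩`, defined on composable pairs, which is a morphism of crossed
modules from the pullback `C₁ ×_{s,t} C₁` to `C₁`, satisfying the internal category
axioms. -/
structure CatXMod (A₁ B₁ A₀ B₀ : Type*) [Group A₁] [Group B₁] [Group A₀] [Group B₀] where
  φ₁ : B₁ →* MulAut A₁
  α₁ : A₁ →* B₁
  cm1₁ : ∀ b a, α₁ (φ₁ b a) = b * α₁ a * b⁻¹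
  cm2₁ : ∀ a a', φ₁ (α₁ a) a' = a * a' * a⁻¹
  φ₀ : B₀ →* MulAut A₀
  α₀ : A₀ →* B₀
  cm1₀ : ∀ b a, α₀ (φ₀ b a) = b * α₀ a * b⁻¹
  cm2₀ : ∀ a a', φ₀ (α₀ a) a' = a * a' * a⁻¹
  sA : A₁ →* A₀
  sB : B₁ →* B₀
  s_comm : ∀ a, sB (α₁ a) = α₀ (sA a)
  s_equiv : ∀ b a, sA (φ₁ b a) = φ₀ (sB b) (sA a)
  tA : A₁ →* A₀
  tB : B₁ →* B₀
  t_comm : ∀ a, tB (α₁ a) = α₀ (tA a)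
  t_equiv : ∀ b a, tA (φ₁ b a) = φ₀ (tB b) (tA a)
  εA : A₀ →* A₁
  εB : B₀ →* B₁
  ε_comm : ∀ n, α₁ (εA n) = εB (α₀ n)
  ε_equiv : ∀ p n, εA (φ₀ p n) = φ₁ (εB p) (εA n)
  sA_εA : ∀ n, sA (εA n) = n
  tA_εA : ∀ n, tA (εA n) = n
  sB_εB : ∀ p, sB (εB p) = p
  tB_εB : ∀ p, tB (εB p) = p
  compA : A₁ → A₁ → A₁
  compB : B₁ → B₁ → B₁
  sA_comp : ∀ a a', sA a = tA a' → sA (compA a a') = sA a'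
  tA_comp : ∀ a a', sA a = tA a' → tA (compA a a') = tA a
  sB_comp : ∀ b b', sB b = tB b' → sB (compB b b') = sB b'
  tB_comp : ∀ b b', sB b = tB b' → tB (compB b b') = tB b
  compA_mul : ∀ a a' c c', sA a = tA a' → sA c = tA c' →
    compA (a * c) (a' * c') = compA a a' * compA c c'
  compB_mul : ∀ b b' d d', sB b = tB b' → sB d = tB d' →
    compB (b * d) (b' * d') = compB b b' * compB d d'
  compA_assoc : ∀ a a' a'', sA a = tA a' → sA a' = tA a'' →
    compA a (compA a' a'') = compA (compA a a') a''
  compB_assoc : ∀ b b' b'', sB b = tB b' → sB b' = tB b'' →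
    compB b (compB b' b'') = compB (compB b b') b''
  id_compA : ∀ a, compA (εA (tA a)) a = a
  compA_id : ∀ a, compA a (εA (sA a)) = a
  id_compB : ∀ b, compB (εB (tB b)) b = b
  compB_id : ∀ b, compB b (εB (sB b)) = b
  comp_comm : ∀ a a', sA a = tA a' → α₁ (compA a a') = compB (α₁ a) (α₁ a')
  comp_equiv : ∀ b b' a a', sB b = tB b' → sA a = tA a' →
    φ₁ (compB b b') (compA a a') = compA (φ₁ b a) (φ₁ b' a')

section Aux

variable {H G : Type*} [Group H] [Group G]

/-- Restrict a homomorphism into `MulAut G` to a subgroup invariant under the action. -/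
def homAutRestrict (Φ : H →* MulAut G) (K : Subgroup G)
    (hK : ∀ (h : H) (g : G), g ∈ K → Φ h g ∈ K) : H →* MulAut K where
  toFun h :=
    { toFun := fun g => ⟨Φ h g, hK h g g.2⟩
      invFun := fun g => ⟨Φ h⁻¹ g, hK h⁻¹ g g.2⟩
      left_inv := fun g => Subtype.ext (by
        simp [← MulAut.mul_apply, ← map_mul])
      right_inv := fun g => Subtype.ext (by
        show Φ h (Φ h⁻¹ (g : G)) = g
        rw [← MulAut.mul_apply, ← map_mul, mul_inv_cancel, map_one, MulAut.one_apply])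
      map_mul' := fun g g' => Subtype.ext (by simp) }
  map_one' := by
    ext g
    simp
  map_mul' := fun h h' => by
    ext g
    simp [MulAut.mul_apply]

@[simp] lemma homAutRestrict_apply (Φ : H →* MulAut G) (K : Subgroup G)
    (hK : ∀ (h : H) (g : G), g ∈ K → Φ h g ∈ K) (h : H) (g : K) :
    (homAutRestrict Φ K hK h g : G) = Φ h g := rfl

end Aux

namespace CatXMod

variable {A₁ B₁ A₀ B₀ : Type*} [Group A₁] [Group B₁] [Group A₀] [Group B₀]
  (C : CatXMod A₁ B₁ A₀ B₀)

/-- The composition in an internal category in groups is determined by the group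
structure: `a ∘ a' = a * ε(s a)⁻¹ * a'`. -/
lemma compA_eq (a a' : A₁) (hs : C.sA a = C.tA a') :
    C.compA a a' = a * (C.εA (C.sA a))⁻¹ * a' := by
  have e : C.εA (C.sA a) * ((C.εA (C.sA a))⁻¹ * a') = a' := by group
  have key := C.compA_mul a (C.εA (C.sA a)) 1 ((C.εA (C.sA a))⁻¹ * a')
    ((C.tA_εA _).symm) (by simp [C.tA_εA, hs])
  rw [mul_one, e, C.compA_id a] at key
  have h3 : C.compA 1 ((C.εA (C.sA a))⁻¹ * a') = (C.εA (C.sA a))⁻¹ * a' := by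
    have := C.id_compA ((C.εA (C.sA a))⁻¹ * a')
    simpa [C.tA_εA, hs] using this
  rw [h3] at key
  rw [key]; group

lemma compB_eq (b b' : B₁) (hs : C.sB b = C.tB b') :
    C.compB b b' = b * (C.εB (C.sB b))⁻¹ * b' := by
  have e : C.εB (C.sB b) * ((C.εB (C.sB b))⁻¹ * b') = b' := by group
  have key := C.compB_mul b (C.εB (C.sB b)) 1 ((C.εB (C.sB b))⁻¹ * b')
    ((C.tB_εB _).symm) (by simp [C.tB_εB, hs])
  rw [mul_one, e, C.compB_id b] at key
  have h3 : C.compB 1 ((C.εB (C.sB b))⁻¹ * b') = (C.εB (C.sB b))⁻¹ * b' := by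
    have := C.id_compB ((C.εB (C.sB b))⁻¹ * b')
    simpa [C.tB_εB, hs] using this
  rw [h3] at key
  rw [key]; group

/-- Elements of `ker tB` act trivially on elements of `ker sA`. -/
lemma kert_act (b : B₁) (hb : C.tB b = 1) (l : A₁) (hl : C.sA l = 1) :
    C.φ₁ b l = l := by
  have hB : C.compB 1 b = b := by
    have := C.id_compB b; rwa [hb, map_one] at this
  have hA : C.compA l 1 = l := by
    have := C.compA_id l; rwa [hl, map_one] at this
  have key := C.comp_equiv 1 b l 1 (by simp [hb]) (by simp [hl])
  rw [hB] at key
  simp only [map_one, MulAut.one_apply] at key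
  rwa [hA] at key

/-- `ker tB` commutes with `ker sB`. -/
lemma kert_comm (x y : B₁) (hx : C.tB x = 1) (hy : C.sB y = 1) :
    x * y = y * x := by
  have h1 : C.compB y x = x * y := by
    have key := C.compB_mul 1 x y 1 (by simp [hx]) (by simp [hy])
    simp only [mul_one, one_mul] at key
    have hB : C.compB 1 x = x := by
      have := C.id_compB x; rwa [hx, map_one] at this
    have hB' : C.compB y 1 = y := by
      have := C.compB_id y; rwa [hy, map_one] at this
    rw [hB, hB'] at key; exact key
  have h2 : C.compB y x = y * x := by
    have := C.compB_eq y x (by rw [hy, hx])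
    rwa [hy, map_one, inv_one, mul_one] at this
  rw [← h1, h2]

/-- For `m ∈ ker sB` acting on `x ∈ ker sA`, the action agrees with that of `εB (tB m)`. -/
lemma kers_act_eq (m : B₁) (hm : C.sB m = 1) (x : A₁) (hx : C.sA x = 1) :
    C.φ₁ m x = C.φ₁ (C.εB (C.tB m)) x := by
  have hb : C.tB ((C.εB (C.tB m))⁻¹ * m) = 1 := by simp [C.tB_εB]
  have htriv : C.φ₁ ((C.εB (C.tB m))⁻¹ * m) x = x := C.kert_act _ hb x hx
  calc C.φ₁ m x = C.φ₁ (C.εB (C.tB m) * ((C.εB (C.tB m))⁻¹ * m)) x := by group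
    _ = C.φ₁ (C.εB (C.tB m)) (C.φ₁ ((C.εB (C.tB m))⁻¹ * m) x) := by
        rw [map_mul, MulAut.mul_apply]
    _ = C.φ₁ (C.εB (C.tB m)) x := by rw [htriv]

/-- Key Peiffer-type identity: for `m ∈ ker sB` and `l ∈ ker sA`,
`φ₁ m l = (φ₁ m (εA (tA l)) * (εA (tA l))⁻¹) * l`. -/
lemma act_decomp (m : B₁) (hm : C.sB m = 1) (l : A₁) (hl : C.sA l = 1) :
    C.φ₁ m l = C.φ₁ m (C.εA (C.tA l)) * (C.εA (C.tA l))⁻¹ * l := by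
  have hB : C.compB m 1 = m := by
    have := C.compB_id m; rwa [hm, map_one] at this
  have hA : C.compA (C.εA (C.tA l)) l = l := C.id_compA l
  have key := C.comp_equiv m 1 (C.εA (C.tA l)) l (by simp [hm]) (by rw [C.sA_εA])
  rw [hB, hA] at key
  simp only [map_one, MulAut.one_apply] at key
  have hs : C.sA (C.φ₁ m (C.εA (C.tA l))) = C.tA l := by
    rw [C.s_equiv, hm, map_one, MulAut.one_apply, C.sA_εA]
  rw [key, C.compA_eq _ _ (by rw [hs]), hs]

end CatXMod

namespace CatXMod

variable {A₁ B₁ A₀ B₀ : Type*} [Group A₁] [Group B₁] [Group A₀] [Group B₀]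
  (C : CatXMod A₁ B₁ A₀ B₀)

lemma phi_inv_apply (b : B₁) (x : A₁) : C.φ₁ b⁻¹ (C.φ₁ b x) = x := by
  rw [← MulAut.mul_apply, ← map_mul, inv_mul_cancel, map_one, MulAut.one_apply]

/-- `λ : L → M`, the restriction of `α₁` to `ker sA`, landing in `ker sB`. -/
def lamK : C.sA.ker →* C.sB.ker :=
  MonoidHom.codRestrict (C.α₁.comp C.sA.ker.subtype) C.sB.ker fun l => by
    have hl : C.sA (l : A₁) = 1 := l.2
    simp [MonoidHom.mem_ker, C.s_comm, hl]

@[simp] lemma lamK_apply (l : C.sA.ker) : (C.lamK l : B₁) = C.α₁ (l : A₁) := rfl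

/-- `λ' : L → N`, the restriction of `tA`. -/
def lamK' : C.sA.ker →* A₀ := C.tA.comp C.sA.ker.subtype

@[simp] lemma lamK'_apply (l : C.sA.ker) : C.lamK' l = C.tA (l : A₁) := rfl

/-- `μ : M → P`, the restriction of `tB`. -/
def muK : C.sB.ker →* B₀ := C.tB.comp C.sB.ker.subtype

@[simp] lemma muK_apply (m : C.sB.ker) : C.muK m = C.tB (m : B₁) := rfl

lemma kerA_stable (p : B₀) (a : A₁) (ha : a ∈ C.sA.ker) :
    (C.φ₁.comp C.εB) p a ∈ C.sA.ker := by
  have ha' : C.sA a = 1 := ha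
  simp [MonoidHom.mem_ker, C.s_equiv, ha']

/-- The action of `P = B₀` on `L = ker sA`, `p • l = φ₁ (εB p) l`. -/
def PhiL : B₀ →* MulAut C.sA.ker :=
  homAutRestrict (C.φ₁.comp C.εB) C.sA.ker C.kerA_stable

@[simp] lemma PhiL_apply (p : B₀) (l : C.sA.ker) :
    (C.PhiL p l : A₁) = C.φ₁ (C.εB p) (l : A₁) := rfl

lemma kerB_stable (p : B₀) (b : B₁) (hb : b ∈ C.sB.ker) :
    (MulAut.conj.comp C.εB) p b ∈ C.sB.ker := by
  have hb' : C.sB b = 1 := hb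
  simp [MonoidHom.mem_ker, MulAut.conj_apply, hb', C.sB_εB]

/-- The action of `P = B₀` on `M = ker sB`, `p • m = εB p * m * (εB p)⁻¹`. -/
def PhiM : B₀ →* MulAut C.sB.ker :=
  homAutRestrict (MulAut.conj.comp C.εB) C.sB.ker C.kerB_stable

@[simp] lemma PhiM_apply (p : B₀) (m : C.sB.ker) :
    (C.PhiM p m : B₁) = C.εB p * (m : B₁) * (C.εB p)⁻¹ := rfl

/-- The `h`-map of the crossed square: `h(m, n) = (m • 1_n) * (1_n)⁻¹`. -/
def hK (m : C.sB.ker) (n : A₀) : C.sA.ker :=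
  ⟨C.φ₁ (m : B₁) (C.εA n) * (C.εA n)⁻¹, by
    have hm : C.sB (m : B₁) = 1 := m.2
    simp [MonoidHom.mem_ker, C.s_equiv, hm, C.sA_εA]⟩

@[simp] lemma hK_apply (m : C.sB.ker) (n : A₀) :
    (C.hK m n : A₁) = C.φ₁ (m : B₁) (C.εA n) * (C.εA n)⁻¹ := rfl

end CatXMod

/-- For an internal groupoid `C` in `XMod`, setting `L = ker sA`, `M = ker sB`,
`N = A₀`, `P = B₀`, `λ = α₁|_L`, `λ' = tA|_L`, `μ = tB|_M`, `ν = α₀`, with the actions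
`p • m = 1_p * m * (1_p)⁻¹` on `M`, `p • l = 1_p • l` (via the `B₁`-action on `A₁`)
on `L`, the given action `φ₀` on `N`, and `h : M × N → L`, `h(m, n) = m • 1_n * (1_n)⁻¹`,
the data `(L, M, N, P, λ, λ', μ, ν, h)` is a crossed square. -/
theorem catXMod_to_crossedSquare {A₁ B₁ A₀ B₀ : Type*}
    [Group A₁] [Group B₁] [Group A₀] [Group B₀] (C : CatXMod A₁ B₁ A₀ B₀) :
    ∃ (lam : C.sA.ker →* C.sB.ker) (lam' : C.sA.ker →* A₀) (mu : C.sB.ker →* B₀)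
      (ΦL : B₀ →* MulAut C.sA.ker) (ΦM : B₀ →* MulAut C.sB.ker)
      (h : C.sB.ker → A₀ → C.sA.ker),
      -- identification of the structure maps
      (∀ l : C.sA.ker, ((lam l : B₁)) = C.α₁ (l : A₁)) ∧
      (∀ l : C.sA.ker, lam' l = C.tA (l : A₁)) ∧
      (∀ m : C.sB.ker, mu m = C.tB (m : B₁)) ∧
      (∀ (p : B₀) (l : C.sA.ker), ((ΦL p l : A₁)) = C.φ₁ (C.εB p) (l : A₁)) ∧
      (∀ (p : B₀) (m : C.sB.ker), ((ΦM p m : B₁)) = C.εB p * (m : B₁) * (C.εB p)⁻¹) ∧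
      (∀ (m : C.sB.ker) (n : A₀), ((h m n : A₁)) = C.φ₁ (m : B₁) (C.εA n) * (C.εA n)⁻¹) ∧
      -- ν λ' = μ λ
      (∀ l : C.sA.ker, C.α₀ (lam' l) = mu (lam l)) ∧
      -- (i) λ and λ' are P-equivariant
      (∀ (p : B₀) (l : C.sA.ker), lam (ΦL p l) = ΦM p (lam l)) ∧
      (∀ (p : B₀) (l : C.sA.ker), lam' (ΦL p l) = C.φ₀ p (lam' l)) ∧
      -- (i) μ, ν and κ = μ λ are crossed modules
      (∀ (p : B₀) (m : C.sB.ker), mu (ΦM p m) = p * mu m * p⁻¹) ∧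
      (∀ m m' : C.sB.ker, ΦM (mu m) m' = m * m' * m⁻¹) ∧
      (∀ (p : B₀) (n : A₀), C.α₀ (C.φ₀ p n) = p * C.α₀ n * p⁻¹) ∧
      (∀ n n' : A₀, C.φ₀ (C.α₀ n) n' = n * n' * n⁻¹) ∧
      (∀ (p : B₀) (l : C.sA.ker), mu (lam (ΦL p l)) = p * mu (lam l) * p⁻¹) ∧
      (∀ l l' : C.sA.ker, ΦL (mu (lam l)) l' = l * l' * l⁻¹) ∧
      -- (ii)
      (∀ (m : C.sB.ker) (n : A₀), lam (h m n) = m * ΦM (C.α₀ n) m⁻¹) ∧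
      (∀ (m : C.sB.ker) (n : A₀), lam' (h m n) = C.φ₀ (mu m) n * n⁻¹) ∧
      -- (iii)
      (∀ (l : C.sA.ker) (n : A₀), h (lam l) n = l * ΦL (C.α₀ n) l⁻¹) ∧
      (∀ (m : C.sB.ker) (l : C.sA.ker), h m (lam' l) = ΦL (mu m) l * l⁻¹) ∧
      -- (iv)
      (∀ (m m' : C.sB.ker) (n : A₀), h (m * m') n = ΦL (mu m) (h m' n) * h m n) ∧
      (∀ (m : C.sB.ker) (n n' : A₀), h m (n * n') = h m n * ΦL (C.α₀ n) (h m n')) ∧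
      -- (v)
      (∀ (p : B₀) (m : C.sB.ker) (n : A₀), h (ΦM p m) (C.φ₀ p n) = ΦL p (h m n)) := by

  classical
  refine ⟨C.lamK, C.lamK', C.muK, C.PhiL, C.PhiM, C.hK,
    fun l => rfl, fun l => rfl, fun m => rfl, fun p l => rfl, fun p m => rfl,
    fun m n => rfl, ?_, ?_, ?_, ?_, ?_, ?_, ?_, ?_, ?_, ?_, ?_, ?_, ?_, ?_, ?_, ?_⟩
  · -- ν λ' = μ λ
    intro l
    exact (C.t_comm (l : A₁)).symm
  · -- λ equivariant
    intro p l
    apply Subtype.ext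
    simp [C.cm1₁]
  · -- λ' equivariant
    intro p l
    simp [C.t_equiv, C.tB_εB]
  · -- μ crossed module, axiom 1
    intro p m
    simp [C.tB_εB]
  · -- μ crossed module, axiom 2 (Peiffer)
    intro m m'
    apply Subtype.ext
    have hm : C.sB (m : B₁) = 1 := m.2
    have hm' : C.sB (m' : B₁) = 1 := m'.2
    have hb : C.tB ((C.εB (C.tB (m : B₁)))⁻¹ * (m : B₁)) = 1 := by simp [C.tB_εB]
    have hcomm := C.kert_comm _ (m' : B₁) hb hm'
    have key : (m' : B₁) = ((C.εB (C.tB (m : B₁)))⁻¹ * (m : B₁)) * (m' : B₁) *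
        ((C.εB (C.tB (m : B₁)))⁻¹ * (m : B₁))⁻¹ := by rw [hcomm]; group
    show C.εB (C.tB (m : B₁)) * (m' : B₁) * (C.εB (C.tB (m : B₁)))⁻¹
      = ((m * m' * m⁻¹ : C.sB.ker) : B₁)
    simp only [CatXMod.PhiL_apply, CatXMod.PhiM_apply, CatXMod.hK_apply, CatXMod.lamK_apply, MulMemClass.coe_mul, InvMemClass.coe_inv]
    conv_lhs => rw [key]
    group
  · -- ν crossed module, axiom 1
    exact C.cm1₀
  · -- ν crossed module, axiom 2
    exact C.cm2₀
  · -- κ = μλ crossed module, axiom 1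
    intro p l
    simp [C.cm1₁, C.tB_εB]
  · -- κ = μλ crossed module, axiom 2
    intro l l'
    apply Subtype.ext
    have hm : C.sB (C.α₁ (l : A₁)) = 1 := by
      have hl : C.sA (l : A₁) = 1 := l.2
      rw [C.s_comm, hl, map_one]
    have hl' : C.sA (l' : A₁) = 1 := l'.2
    have := (C.kers_act_eq (C.α₁ (l : A₁)) hm (l' : A₁) hl').symm
    show C.φ₁ (C.εB (C.tB (C.α₁ (l : A₁)))) (l' : A₁) = ((l * l' * l⁻¹ : C.sA.ker) : A₁)
    simp only [CatXMod.PhiL_apply, CatXMod.PhiM_apply, CatXMod.hK_apply, CatXMod.lamK_apply, MulMemClass.coe_mul, InvMemClass.coe_inv]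
    rw [this, C.cm2₁]
  · -- (ii) first
    intro m n
    apply Subtype.ext
    show C.α₁ (C.φ₁ (m : B₁) (C.εA n) * (C.εA n)⁻¹)
      = ((m * C.PhiM (C.α₀ n) m⁻¹ : C.sB.ker) : B₁)
    simp only [CatXMod.PhiL_apply, CatXMod.PhiM_apply, CatXMod.hK_apply, CatXMod.lamK_apply, MulMemClass.coe_mul, InvMemClass.coe_inv]
    simp only [map_mul, map_inv, C.cm1₁, ← C.ε_comm]
    group
  · -- (ii) second
    intro m n
    show C.tA (C.φ₁ (m : B₁) (C.εA n) * (C.εA n)⁻¹) = _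
    simp [C.t_equiv, C.tA_εA]
  · -- (iii) first
    intro l n
    apply Subtype.ext
    show C.φ₁ (C.α₁ (l : A₁)) (C.εA n) * (C.εA n)⁻¹
      = ((l * C.PhiL (C.α₀ n) l⁻¹ : C.sA.ker) : A₁)
    simp only [CatXMod.PhiL_apply, CatXMod.PhiM_apply, CatXMod.hK_apply, CatXMod.lamK_apply, MulMemClass.coe_mul, InvMemClass.coe_inv]
    rw [← C.ε_comm, C.cm2₁, C.cm2₁]
    group
  · -- (iii) second
    intro m l
    apply Subtype.ext
    have hm : C.sB (m : B₁) = 1 := m.2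
    have hl : C.sA (l : A₁) = 1 := l.2
    have h1 := C.act_decomp (m : B₁) hm (l : A₁) hl
    have h2 := C.kers_act_eq (m : B₁) hm (l : A₁) hl
    show C.φ₁ (m : B₁) (C.εA (C.tA (l : A₁))) * (C.εA (C.tA (l : A₁)))⁻¹
      = ((C.PhiL (C.tB (m : B₁)) l * l⁻¹ : C.sA.ker) : A₁)
    simp only [CatXMod.PhiL_apply, CatXMod.PhiM_apply, CatXMod.hK_apply, CatXMod.lamK_apply, MulMemClass.coe_mul, InvMemClass.coe_inv]
    rw [← h2, h1]
    group
  · -- (iv) first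
    intro m m' n
    apply Subtype.ext
    have hm : C.sB (m : B₁) = 1 := m.2
    have hx : C.sA ((C.hK m' n : A₁)) = 1 := (C.hK m' n).2
    show C.φ₁ ((m * m' : C.sB.ker) : B₁) (C.εA n) * (C.εA n)⁻¹
      = ((C.PhiL (C.tB (m : B₁)) (C.hK m' n) * C.hK m n : C.sA.ker) : A₁)
    simp only [CatXMod.PhiL_apply, CatXMod.PhiM_apply, CatXMod.hK_apply, CatXMod.lamK_apply, MulMemClass.coe_mul, InvMemClass.coe_inv]
    rw [← C.kers_act_eq (m : B₁) hm (C.φ₁ (m' : B₁) (C.εA n) * (C.εA n)⁻¹) hx]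
    simp only [CatXMod.hK_apply, map_mul, map_inv, MulAut.mul_apply]
    group
  · -- (iv) second
    intro m n n'
    apply Subtype.ext
    show C.φ₁ (m : B₁) (C.εA (n * n')) * (C.εA (n * n'))⁻¹
      = ((C.hK m n * C.PhiL (C.α₀ n) (C.hK m n') : C.sA.ker) : A₁)
    simp only [CatXMod.PhiL_apply, CatXMod.PhiM_apply, CatXMod.hK_apply, CatXMod.lamK_apply, MulMemClass.coe_mul, InvMemClass.coe_inv]
    rw [← C.ε_comm, C.cm2₁]
    simp only [map_mul, map_inv, mul_inv_rev]
    group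
  · -- (v)
    intro p m n
    apply Subtype.ext
    show C.φ₁ (C.εB p * (m : B₁) * (C.εB p)⁻¹) (C.εA (C.φ₀ p n))
        * (C.εA (C.φ₀ p n))⁻¹
      = C.φ₁ (C.εB p) ((C.hK m n : A₁))
    rw [C.ε_equiv]
    simp only [CatXMod.hK_apply, map_mul, map_inv, MulAut.mul_apply, C.phi_inv_apply]
    rw [MulAut.inv_def]
    simp only [MulEquiv.symm_apply_apply]
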